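/- Let $f_V:\mathbb{R}\to(0,\infty)$ be a log-concave probability density with right derivative $f'_V$, and let $f_U:\mathbb{R}\to(0,\infty)$ be positive. Then for every $w\in\mathbb{R}$, $\int_{\mathbb{R}}\int_{\mathbb{R}}(v_2-v_1)\left(\frac{f'_V(v_1)}{f_V(v_1)}-\frac{f'_V(v_2)}{f_V(v_2)}\right)f_U(w-v_1)f_U(w-v_2)f_V(v_1)f_V(v_2)\,dv_1\,dv_2 > 0$, provided the integral is well-defined. -/

import Mathlib

open Set MeasureTheory

/-- Sandwich lemma: for a concave function on `ℝ` with right derivatives, the right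
derivative at `y` is at most the slope over `[x, y]`, which is at most the right
derivative at `x`, whenever `x < y`. -/
lemma concave_rightDeriv_sandwich (g d : ℝ → ℝ)
    (hc : ConcaveOn ℝ univ g) (hd : ∀ x, HasDerivWithinAt g (d x) (Ici x) x)
    {x y : ℝ} (hxy : x < y) :
    d y ≤ (g y - g x) / (y - x) ∧ (g y - g x) / (y - x) ≤ d x := by
  constructor
  · -- d y ≤ slope x y
    have ht : Filter.Tendsto (slope g y) (nhdsWithin y (Ioi y)) (nhds (d y)) := by
      have := (hasDerivWithinAt_iff_tendsto_slope).1 (hd y)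
      simpa [Ici_sdiff_left] using this
    refine le_of_tendsto ht ?_
    filter_upwards [self_mem_nhdsWithin] with z hz
    have hz' : y < z := hz
    have := hc.slope_anti_adjacent (mem_univ x) (mem_univ z) hxy hz'
    rw [slope_def_field]
    simpa [div_eq_mul_inv] using this
  · -- slope x y ≤ d x
    have ht : Filter.Tendsto (slope g x) (nhdsWithin x (Ioi x)) (nhds (d x)) := by
      have := (hasDerivWithinAt_iff_tendsto_slope).1 (hd x)
      simpa [Ici_sdiff_left] using this
    refine ge_of_tendsto ht ?_
    filter_upwards [Ioo_mem_nhdsGT_of_mem (Set.left_mem_Ico.2 hxy)] with z hz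
    rw [slope_def_field]
    rcases eq_or_lt_of_le (le_of_lt hz.2) with h | h
    · rw [h]
    · -- x < z < y : slope x y ≤ slope x z for concave g
      have := (hc.neg).secant_mono_aux2 (f := fun t => -g t)
        (mem_univ x) (mem_univ y) hz.1 h
      have h1 : 0 < z - x := by linarith [hz.1]
      have h2 : 0 < y - x := by linarith
      rw [div_le_div_iff₀ h1 h2] at this
      rw [div_le_div_iff₀ h2 h1]
      nlinarith [this]

theorem efron_double_integral_pos
    (fU fV fV' : ℝ → ℝ) (w : ℝ)
    (hVmeas : Measurable fV) (hVpos : ∀ x, 0 < fV x)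
    (hVlc : ConcaveOn ℝ univ (fun x => Real.log (fV x)))
    (hVint : Integrable fV) (hVprob : ∫ x, fV x = 1)
    (hV' : ∀ x, HasDerivWithinAt fV (fV' x) (Ici x) x)
    (hUmeas : Measurable fU) (hUpos : ∀ x, 0 < fU x)
    (hwell : Integrable (fun p : ℝ × ℝ =>
      (p.2 - p.1) * (fV' p.1 / fV p.1 - fV' p.2 / fV p.2) *
        (fU (w - p.1) * fU (w - p.2) * fV p.1 * fV p.2))) :
    0 < ∫ p : ℝ × ℝ,
      (p.2 - p.1) * (fV' p.1 / fV p.1 - fV' p.2 / fV p.2) *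
        (fU (w - p.1) * fU (w - p.2) * fV p.1 * fV p.2) := by
  set s : ℝ → ℝ := fun x => fV' x / fV x with hs
  set g : ℝ → ℝ := fun x => Real.log (fV x) with hg
  have hgd : ∀ x, HasDerivWithinAt g (s x) (Ici x) x := fun x =>
    (hV' x).log (ne_of_gt (hVpos x))
  -- sandwich
  have hsand : ∀ {x y : ℝ}, x < y →
      s y ≤ (g y - g x) / (y - x) ∧ (g y - g x) / (y - x) ≤ s x :=
    fun {x y} hxy => concave_rightDeriv_sandwich g s hVlc hgd hxy
  have hanti : ∀ {x y : ℝ}, x ≤ y → s y ≤ s x := by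
    intro x y hxy
    rcases eq_or_lt_of_le hxy with rfl | h
    · exact le_refl _
    · exact le_trans (hsand h).1 (hsand h).2
  set F : ℝ × ℝ → ℝ := fun p =>
    (p.2 - p.1) * (s p.1 - s p.2) * (fU (w - p.1) * fU (w - p.2) * fV p.1 * fV p.2) with hF
  have hFnn : ∀ p : ℝ × ℝ, 0 ≤ F p := by
    intro p
    have hpos : (0:ℝ) < fU (w - p.1) * fU (w - p.2) * fV p.1 * fV p.2 := by
      have := hUpos (w - p.1); have := hUpos (w - p.2); have := hVpos p.1; have := hVpos p.2
      positivity
    rcases le_total p.1 p.2 with h | h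
    · have h2 : s p.2 ≤ s p.1 := hanti h
      have : 0 ≤ (p.2 - p.1) * (s p.1 - s p.2) :=
        mul_nonneg (by linarith) (by linarith)
      exact mul_nonneg this hpos.le
    · have h2 : s p.1 ≤ s p.2 := hanti h
      have : 0 ≤ (p.2 - p.1) * (s p.1 - s p.2) := by nlinarith
      exact mul_nonneg this hpos.le
  have hwell' : Integrable F := hwell
  rw [show (∫ p : ℝ × ℝ,
      (p.2 - p.1) * (fV' p.1 / fV p.1 - fV' p.2 / fV p.2) *
        (fU (w - p.1) * fU (w - p.2) * fV p.1 * fV p.2)) = ∫ p : ℝ × ℝ, F p from rfl]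
  rw [integral_pos_iff_support_of_nonneg hFnn hwell']
  -- find strict decrease of the score
  have hex : ∃ a b : ℝ, a < b ∧ s b < s a := by
    by_contra hcon
    push_neg at hcon
    have hconst : ∀ t : ℝ, s t = s 0 := by
      intro t
      rcases lt_trichotomy t 0 with h | h | h
      · exact le_antisymm (hcon t 0 h) (hanti h.le)
      · rw [h]
      · exact le_antisymm (hanti h.le) (hcon 0 t h)
    set c : ℝ := s 0 with hc
    have hlin : ∀ t : ℝ, g t = g 0 + c * t := by
      intro t
      rcases lt_trichotomy t 0 with h | h | h
      · have h1 := (hsand h).1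
        have h2 := (hsand h).2
        simp only [hconst] at h1 h2
        have h3 : (g 0 - g t) / (0 - t) = c := le_antisymm h2 h1
        have ht : (0:ℝ) - t ≠ 0 := by linarith
        rw [div_eq_iff ht] at h3
        linear_combination -h3
      · rw [h]; ring
      · have h1 := (hsand h).1
        have h2 := (hsand h).2
        simp only [hconst] at h1 h2
        have h3 : (g t - g 0) / (t - 0) = c := le_antisymm h2 h1
        have ht : t - (0:ℝ) ≠ 0 := by linarith
        rw [div_eq_iff ht] at h3
        linear_combination h3
    have hfV : ∀ t : ℝ, fV t = Real.exp (g 0 + c * t) := by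
      intro t
      rw [← hlin t, hg]
      exact (Real.exp_log (hVpos t)).symm
    -- fV is bounded below by fV 0 on a half-line of infinite measure: contradiction
    have hhalf : ∃ I : Set ℝ, MeasurableSet I ∧ volume I = ⊤ ∧ ∀ t ∈ I, fV 0 ≤ fV t := by
      rcases le_total 0 c with hcpos | hcneg
      · refine ⟨Ici 0, measurableSet_Ici, Real.volume_Ici, fun t ht => ?_⟩
        rw [hfV t, hfV 0]
        exact Real.exp_le_exp.2 (by nlinarith [ht.out])
      · refine ⟨Iic 0, measurableSet_Iic, Real.volume_Iic, fun t ht => ?_⟩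
        rw [hfV t, hfV 0]
        exact Real.exp_le_exp.2 (by nlinarith [ht.out])
    obtain ⟨I, hImeas, hIvol, hIle⟩ := hhalf
    have hconstInt : IntegrableOn (fun _ : ℝ => fV 0) I := by
      refine Integrable.mono' (hVint.integrableOn) aestronglyMeasurable_const ?_
      rw [MeasureTheory.ae_restrict_iff' hImeas]
      exact Filter.Eventually.of_forall fun t ht => by
        rw [Real.norm_eq_abs, abs_of_pos (hVpos 0)]; exact hIle t ht
    rcases integrable_const_iff.mp hconstInt with h0 | hfin
    · exact absurd h0 (ne_of_gt (hVpos 0))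
    · have hfin := measure_lt_top (volume.restrict I) univ
      rw [Measure.restrict_apply_univ, hIvol] at hfin
      exact absurd hfin (by simp)
  obtain ⟨a, b, hab, hsab⟩ := hex
  -- the support contains a rectangle of positive measure
  have hsub : Icc (a - 1) a ×ˢ Icc b (b + 1) ⊆ Function.support F := by
    rintro ⟨v1, v2⟩ ⟨hv1, hv2⟩
    have hv1a : v1 ≤ a := hv1.2
    have hbv2 : b ≤ v2 := hv2.1
    have h1 : 0 < v2 - v1 := by linarith
    have h2 : 0 < s v1 - s v2 :=
      sub_pos.2 (lt_of_le_of_lt (hanti hbv2) (lt_of_lt_of_le hsab (hanti hv1a)))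
    have hpos : (0:ℝ) < fU (w - v1) * fU (w - v2) * fV v1 * fV v2 := by
      have := hUpos (w - v1); have := hUpos (w - v2); have := hVpos v1; have := hVpos v2
      positivity
    exact ne_of_gt (by exact mul_pos (mul_pos h1 h2) hpos)
  refine lt_of_lt_of_le ?_ (measure_mono hsub)
  rw [Measure.volume_eq_prod, Measure.prod_prod, Real.volume_Icc, Real.volume_Icc]
  norm_num
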